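/- arXiv:2303.10509 — 3 statements merged into one kernel-verified Lean document; each statement's English description precedes it below -/
import Mathlib

section
/- The mean of the assorter h over all ballots exceeds 1/2 if and only if s(i,j) > s(c,w). -/
/-- A ballot `b` (a duplicate-free list of candidates) prefers `i` over `j` if
`i` appears before `j` on `b`, or `i` appears on `b` and `j` does not. -/
def Prefers {C : Type*} [DecidableEq C] (b : List C) (i j : C) : Prop :=
  i ∈ b ∧ (j ∉ b ∨ b.idxOf i < b.idxOf j)

instance {C : Type*} [DecidableEq C] (b : List C) (i j : C) :
    Decidable (Prefers b i j) :=
  inferInstanceAs (Decidable (_ ∧ _))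

/-- `T B i j` is the number of ballots in `B` preferring `i` over `j`. -/
def T {C : Type*} [DecidableEq C] (B : Multiset (List C)) (i j : C) : ℕ :=
  (B.filter fun b => Prefers b i j).card

/-- The pairwise score `s(i,j) = T(i≻j) - T(j≻i)`, as an integer. -/
def score {C : Type*} [DecidableEq C] (B : Multiset (List C)) (i j : C) : ℤ :=
  (T B i j : ℤ) - (T B j i : ℤ)

/-- The indicator (as a rational) of whether ballot `b` prefers `x` over `y`. -/
def ind {C : Type*} [DecidableEq C] (b : List C) (x y : C) : ℚ :=
  if Prefers b x y then 1 else 0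

lemma ind_sum {C : Type*} [DecidableEq C] (B : Multiset (List C)) (x y : C) :
    (B.map fun b => ind b x y).sum = (T B x y : ℚ) := by
  induction B using Multiset.induction with
  | empty => simp [T]
  | cons a s ih =>
    simp only [Multiset.map_cons, Multiset.sum_cons, ih, T, Multiset.filter_cons]
    by_cases h : Prefers a x y
    · rw [if_pos h]; simp [ind, h]; push_cast; ring
    · rw [if_neg h]; simp [ind, h]

lemma sum_lin {C : Type*} [DecidableEq C] (B : Multiset (List C)) (i j c w : C) :
    (B.map fun b => ((ind b i j + ind b w c - ind b c w - ind b j i) + 2) / 4).sum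
        = ((B.map fun b => ind b i j).sum + (B.map fun b => ind b w c).sum
          - (B.map fun b => ind b c w).sum - (B.map fun b => ind b j i).sum
          + 2 * (Multiset.card B : ℚ)) / 4 := by
  induction B using Multiset.induction with
  | empty => simp
  | cons a s ih => simp only [Multiset.map_cons, Multiset.sum_cons, ih,
      Multiset.card_cons]; push_cast; ring

theorem assorter_mean_gt_half_iff {C : Type*} [DecidableEq C]
    (B : Multiset (List C)) (hB : B ≠ 0) (i j c w : C) (hij : i ≠ j) (hcw : c ≠ w) :
    (B.map fun b => ((ind b i j + ind b w c - ind b c w - ind b j i) + 2) / 4).sum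
        / (Multiset.card B : ℚ) > 1 / 2
      ↔ score B i j > score B c w := by
  have hn : (0 : ℚ) < (Multiset.card B : ℚ) := by
    exact_mod_cast Multiset.card_pos.mpr hB
  have hsum : (B.map fun b => ((ind b i j + ind b w c - ind b c w - ind b j i) + 2) / 4).sum
      = ((T B i j : ℚ) + T B w c - T B c w - T B j i + 2 * Multiset.card B) / 4 := by
    have h1 := ind_sum B i j
    have h2 := ind_sum B w c
    have h3 := ind_sum B c w
    have h4 := ind_sum B j i
    rw [sum_lin B i j c w, h1, h2, h3, h4]
  rw [hsum]
  rw [gt_iff_lt, div_lt_div_iff₀ (by norm_num) hn, div_mul_eq_mul_div,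
    lt_div_iff₀ (by norm_num : (0:ℚ) < 4)]
  constructor
  · intro h
    have : (0:ℚ) < (T B i j : ℚ) + T B w c - T B c w - T B j i := by linarith
    have : (0:ℤ) < (T B i j : ℤ) + T B w c - T B c w - T B j i := by exact_mod_cast this
    simp only [score]; omega
  · intro h
    have h' : (0:ℤ) < (T B i j : ℤ) + T B w c - T B c w - T B j i := by
      simp only [score] at h; omega
    have : (0:ℚ) < (T B i j : ℚ) + T B w c - T B c w - T B j i := by exact_mod_cast h'
    linarith
end

section
/- If a Condorcet winner w exists, then the graph built by the Ranked Pairs procedure never contains an edge or path into w, and consequently w is the Ranked Pairs winner. -/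
open Classical in
/-- One step of the Ranked Pairs procedure: add the edge `p.1 → p.2` to `G`
unless `G` already contains a directed path from `p.2` to `p.1`. -/
noncomputable def rpStep {C : Type*} (G : C → C → Prop) (p : C × C) : C → C → Prop :=
  if Relation.ReflTransGen G p.2 p.1 then G
  else fun x y => G x y ∨ (x = p.1 ∧ y = p.2)

/-- The digraph built by the Ranked Pairs procedure after processing the
given list of pairs, starting from the empty digraph. -/
noncomputable def rpBuild {C : Type*} (pairs : List (C × C)) : C → C → Prop :=
  pairs.foldl rpStep (fun _ _ => False)


private lemma rpStep_le {C : Type*} (G : C → C → Prop) (p : C × C) :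
    ∀ x y, G x y → rpStep G p x y := by
  intro x y h
  unfold rpStep
  split
  · exact h
  · exact Or.inl h

private lemma le_foldl {C : Type*} (l : List (C × C)) :
    ∀ (G : C → C → Prop) (x y : C), G x y → (l.foldl rpStep G) x y := by
  induction l with
  | nil => intro G x y h; exact h
  | cons p l ih => intro G x y h; exact ih _ x y (rpStep_le G p x y h)

private lemma foldl_edges {C : Type*} (l : List (C × C)) :
    ∀ (G : C → C → Prop) (x y : C), (l.foldl rpStep G) x y → G x y ∨ (x, y) ∈ l := by
  induction l with
  | nil => intro G x y h; exact Or.inl h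
  | cons p l ih =>
    intro G x y h
    rcases ih _ x y h with h' | h'
    · unfold rpStep at h'
      split at h'
      · exact Or.inl h'
      · rcases h' with h' | ⟨rfl, rfl⟩
        · exact Or.inl h'
        · exact Or.inr (by simp)
    · exact Or.inr (List.mem_cons_of_mem _ h')

private lemma score_antisymm {C : Type*} [DecidableEq C] (B : Multiset (List C)) (i j : C) :
    score B i j = - score B j i := by
  unfold score; ring

theorem condorcet_winner_is_ranked_pairs_winner {C : Type*} [DecidableEq C]
    (B : Multiset (List C)) (w : C)
    (hw : ∀ c : C, c ≠ w → score B w c > 0)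
    (pairs : List (C × C))
    (hpos : ∀ p ∈ pairs, score B p.1 p.2 > 0)
    (hall : ∀ i j : C, score B i j > 0 → (i, j) ∈ pairs)
    (hsorted : pairs.Pairwise fun p q => score B p.1 p.2 > score B q.1 q.2) :
    (∀ c : C, ¬ rpBuild pairs c w) ∧
    (∀ c : C, c ≠ w → ¬ Relation.ReflTransGen (rpBuild pairs) c w) ∧
    (∀ c : C, c ≠ w → Relation.ReflTransGen (rpBuild pairs) w c) := by
  have h1 : ∀ c : C, ¬ rpBuild pairs c w := by
    intro c hc
    rcases foldl_edges pairs _ c w hc with h | h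
    · exact h
    · have hs : score B c w > 0 := hpos (c, w) h
      have hcw : c ≠ w := by
        rintro rfl
        simp [score] at hs
      have := hw c hcw
      rw [score_antisymm] at hs
      omega
  refine ⟨h1, ?_, ?_⟩
  · intro c hc hpath
    rcases Relation.ReflTransGen.cases_tail hpath with h | ⟨b, _, hb⟩
    · exact hc h.symm
    · exact h1 b hb
  · intro c hc
    have hcw : c ≠ w := hc
    have hs : score B w c > 0 := hw c hc
    have hmem : (w, c) ∈ pairs := hall w c hs
    obtain ⟨l₁, l₂, rfl⟩ := List.append_of_mem hmem
    have key : rpBuild (l₁ ++ (w, c) :: l₂) w c := by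
      unfold rpBuild
      rw [List.foldl_append, List.foldl_cons]
      set G₁ : C → C → Prop := l₁.foldl rpStep (fun _ _ => False) with hG₁
      apply le_foldl
      unfold rpStep
      split
      · rename_i hpath
        exfalso
        have hmono : ∀ x y, G₁ x y → rpBuild (l₁ ++ (w, c) :: l₂) x y := by
          intro x y h
          unfold rpBuild
          rw [List.foldl_append, List.foldl_cons]
          exact le_foldl _ _ x y (rpStep_le _ _ x y h)
        have hpath' : Relation.ReflTransGen (rpBuild (l₁ ++ (w, c) :: l₂)) c w :=
          Relation.ReflTransGen.mono hmono _ _ hpath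
        have hne : c ≠ w := hc
        -- reuse the no-path fact
        rcases Relation.ReflTransGen.cases_tail hpath' with h | ⟨b, _, hb⟩
        · exact hne h.symm
        · exact h1 b hb
      · exact Or.inr ⟨rfl, rfl⟩
    exact Relation.ReflTransGen.single key
end

section
/- If every pairwise contest is decisive (s(i,j) ≠ 0 for all distinct i,j), then any two sets satisfying the Smith dominance property are nested by inclusion; hence the minimal such set (the Smith set) is unique. -/
/-- A set `S` of candidates is dominant if it is nonempty and every candidate
in `S` pairwise defeats every candidate outside `S`. -/
def Dominant {C : Type*} [DecidableEq C] [Fintype C] (B : Multiset (List C))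
    (S : Finset C) : Prop :=
  S.Nonempty ∧ ∀ c ∈ S, ∀ c' ∉ S, score B c c' > 0

theorem dominant_sets_nested_and_smith_unique {C : Type*} [DecidableEq C] [Fintype C]
    (B : Multiset (List C))
    (hdec : ∀ i j : C, i ≠ j → score B i j ≠ 0)
    (S S' : Finset C) (hS : Dominant B S) (hS' : Dominant B S') :
    (S ⊆ S' ∨ S' ⊆ S) ∧
    ((∀ T : Finset C, Dominant B T → ¬ T ⊂ S) →
     (∀ T : Finset C, Dominant B T → ¬ T ⊂ S') → S = S') := by
  have nested : S ⊆ S' ∨ S' ⊆ S := by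
    by_contra h
    push_neg at h
    obtain ⟨h1, h2⟩ := h
    obtain ⟨a, haS, haS'⟩ := Finset.not_subset.mp h1
    obtain ⟨b, hbS', hbS⟩ := Finset.not_subset.mp h2
    have hab := hS.2 a haS b hbS
    have hba := hS'.2 b hbS' a haS'
    have : score B a b = -score B b a := by unfold score; ring
    omega
  refine ⟨nested, fun hmS hmS' => ?_⟩
  rcases nested with h | h
  · by_contra hne
    exact hmS' S hS (Finset.ssubset_iff_subset_ne.mpr ⟨h, hne⟩)
  · by_contra hne
    exact hmS S' hS' (Finset.ssubset_iff_subset_ne.mpr ⟨h, Ne.symm hne⟩)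
end
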